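/- Let u := x_{−i_1}(z_1)⋯x_{−i_N}(z_N), where (i_1,…,i_N) = i_0 and z_1,…,z_N ∈ K^×. Let L be lower unitriangular and V upper unitriangular with (w̄_0·u^T)^{−1} = L·V, set u_1 := (w̄_0·V^{−1}·w̄_0^{−1})^T, let d = diag(d_1,…,d_n) with d_1,…,d_n ∈ K^×, and let u_2 be an upper unitriangular matrix such that b := u_1·d·w̄_0·u_2 is lower triangular. Then for every j = 1,…,n, b_{n+1−j, n+1−j} = d_j·(Π_{1≤m≤N, i_m=j−1} z_m)/(Π_{1≤m≤N, i_m=j} z_m), with the convention that an empty product equals 1. -/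

import Mathlib

open Matrix

noncomputable section

variable {K : Type*} [Field K]

/-- `x_i(z)`: identity except entry `z` in (1-based) position `(i, i+1)`. -/
def xMat (n i : ℕ) (z : K) : Matrix (Fin n) (Fin n) K :=
  Matrix.of fun a b => if (a : ℕ) = (b : ℕ) then 1
    else if (a : ℕ) + 1 = i ∧ (b : ℕ) = i then z else 0

/-- `y_i(z)`: identity except entry `z` in (1-based) position `(i+1, i)`. -/
def yMat (n i : ℕ) (z : K) : Matrix (Fin n) (Fin n) K :=
  Matrix.of fun a b => if (a : ℕ) = (b : ℕ) then 1
    else if (a : ℕ) = i ∧ (b : ℕ) + 1 = i then z else 0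

/-- `x_{-i}(z)`: identity except the 2×2 submatrix in (1-based) rows/columns `i, i+1`
is `((z⁻¹, 0), (1, z))`. -/
def xnegMat (n i : ℕ) (z : K) : Matrix (Fin n) (Fin n) K :=
  Matrix.of fun a b =>
    if (a : ℕ) + 1 = i ∧ (b : ℕ) + 1 = i then z⁻¹
    else if (a : ℕ) = i ∧ (b : ℕ) = i then z
    else if (a : ℕ) = i ∧ (b : ℕ) + 1 = i then 1
    else if (a : ℕ) = (b : ℕ) then 1
    else 0

/-- `s̄_i := x_i(-1) · y_i(1) · x_i(-1)`. -/
def sbar (n i : ℕ) : Matrix (Fin n) (Fin n) K :=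
  xMat n i (-1) * yMat n i 1 * xMat n i (-1)

/-- The reduced expression `i₀ = (1,2,…,n-1, 1,2,…,n-2, …, 1,2, 1)` for `w₀`. -/
def i0List (n : ℕ) : List ℕ :=
  ((List.range (n - 1)).map fun j => List.range' 1 (n - 1 - j)).foldr (· ++ ·) []

/-- The reduced expression `i₀' = (n-1,…,1, n-1,…,2, …, n-1,n-2, n-1)` for `w₀`. -/
def i0'List (n : ℕ) : List ℕ :=
  ((List.range (n - 1)).map fun j => (List.range' (1 + j) (n - 1 - j)).reverse).foldr (· ++ ·) []

/-- The matrix `w̄₀ = s̄_{i_1} ⋯ s̄_{i_N}` (computed along `i₀`; it is independent of the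
choice of reduced expression). -/
def w0Mat (n : ℕ) : Matrix (Fin n) (Fin n) K :=
  ((i0List n).map fun i => sbar n i).prod

/-- `x_{-i_1}(z_1) ⋯ x_{-i_N}(z_N)` along the word `l` (with 1-based coordinates `z`). -/
def xnegProd (n : ℕ) (l : List ℕ) (z : ℕ → K) : Matrix (Fin n) (Fin n) K :=
  ((List.range l.length).map fun r => xnegMat n (l.getD r 0) (z (r + 1))).prod

/-- `x_{i_1}(p_1) ⋯ x_{i_N}(p_N)` along the word `l`. -/
def xProd (n : ℕ) (l : List ℕ) (p : ℕ → K) : Matrix (Fin n) (Fin n) K :=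
  ((List.range l.length).map fun r => xMat n (l.getD r 0) (p (r + 1))).prod

/-- `y_{i_1}(q_1) ⋯ y_{i_N}(q_N)` along the word `l`. -/
def yProd (n : ℕ) (l : List ℕ) (q : ℕ → K) : Matrix (Fin n) (Fin n) K :=
  ((List.range l.length).map fun r => yMat n (l.getD r 0) (q (r + 1))).prod

/-- The adjacent transposition `σ_i` (swapping `i` and `i+1`), as a function on `ℕ`. -/
def sigmaFun (i : ℕ) : ℕ → ℕ := fun k => if k = i then i + 1 else if k = i + 1 then i else k

/-- `σ_{i_1} ∘ σ_{i_2} ∘ ⋯ ∘ σ_{i_N}` (rightmost factor applied first). -/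
def wordPerm (l : List ℕ) : ℕ → ℕ := l.foldr (fun i f => sigmaFun i ∘ f) id

/-- A reduced expression for the longest element `w₀` of `Sₙ`. -/
def IsReducedWord (n : ℕ) (l : List ℕ) : Prop :=
  l.length = n * (n - 1) / 2 ∧ (∀ i ∈ l, 1 ≤ i ∧ i ≤ n - 1) ∧
    ∀ k, 1 ≤ k → k ≤ n → wordPerm l k = n + 1 - k

/-- Lower unitriangular. -/
def IsLowerUni {n : ℕ} (M : Matrix (Fin n) (Fin n) K) : Prop :=
  (∀ i, M i i = 1) ∧ ∀ i j : Fin n, i < j → M i j = 0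

/-- Upper unitriangular. -/
def IsUpperUni {n : ℕ} (M : Matrix (Fin n) (Fin n) K) : Prop :=
  (∀ i, M i i = 1) ∧ ∀ i j : Fin n, j < i → M i j = 0

/-- `s_k := Σ_{j=1}^{k-1} (n - j)`. -/
def sIdx (n k : ℕ) : ℕ := ∑ j ∈ Finset.range (k - 1), (n - (j + 1))
/-! ### Auxiliary lemmas -/

section Aux

lemma i0List_succ (m : ℕ) : i0List (m + 1) = List.range' 1 m ++ i0List m := by
  cases m with
  | zero => rfl
  | succ k =>
    show i0List (k + 1 + 1) = _
    unfold i0List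
    rw [show (k + 1 + 1 - 1) = k + 1 from rfl, show (k + 1 - 1) = k from rfl,
      List.range_succ_eq_map, List.map_cons, List.foldr_cons, List.map_map]
    simp [Function.comp_def, Nat.succ_sub_succ]

lemma i0List_mem_bounds (n : ℕ) : ∀ i ∈ i0List n, 1 ≤ i ∧ i + 1 ≤ n := by
  induction n with
  | zero => intro i hi; simp [i0List] at hi
  | succ m ih =>
    intro i hi
    rw [i0List_succ] at hi
    rcases List.mem_append.mp hi with h | h
    · rw [List.mem_range'_1] at h; omega
    · have := ih i h; omega

lemma i0List_length (n : ℕ) : (i0List n).length = n * (n - 1) / 2 := by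
  induction n with
  | zero => rfl
  | succ m ih =>
    rw [i0List_succ, List.length_append, List.length_range', ih,
      show (m + 1) * (m + 1 - 1) / 2 = ∑ i ∈ Finset.range (m + 1), i from
        (Finset.sum_range_id (m + 1)).symm,
      show m * (m - 1) / 2 = ∑ i ∈ Finset.range m, i from (Finset.sum_range_id m).symm,
      Finset.sum_range_succ]
    omega

lemma wordPerm_cons (i : ℕ) (l : List ℕ) : wordPerm (i :: l) = sigmaFun i ∘ wordPerm l := rfl

lemma wordPerm_append (l1 l2 : List ℕ) : wordPerm (l1 ++ l2) = wordPerm l1 ∘ wordPerm l2 := by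
  induction l1 with
  | nil => rfl
  | cons i l ih =>
    funext k
    simp [List.cons_append, wordPerm_cons, ih, Function.comp]

lemma wordPerm_range' (m : ℕ) : ∀ k, wordPerm (List.range' 1 m) k =
    if 1 ≤ k ∧ k ≤ m then k + 1 else if k = m + 1 then 1 else k := by
  induction m with
  | zero =>
    intro k
    show k = _
    split_ifs <;> omega
  | succ p ih =>
    intro k
    have hsplit : List.range' 1 (p + 1) = List.range' 1 p ++ [p + 1] := by
      rw [List.range'_concat]
      congr 2
      omega
    rw [hsplit, wordPerm_append, Function.comp_apply]
    have h1 : wordPerm [p + 1] k = sigmaFun (p + 1) k := rfl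
    rw [h1, ih]
    simp only [sigmaFun]
    split_ifs <;> omega

lemma wordPerm_i0List (n : ℕ) : ∀ k, wordPerm (i0List n) k =
    if 1 ≤ k ∧ k ≤ n then n + 1 - k else k := by
  induction n with
  | zero =>
    intro k
    show k = _
    split_ifs <;> omega
  | succ m ih =>
    intro k
    rw [i0List_succ, wordPerm_append, Function.comp_apply, ih, wordPerm_range']
    split_ifs <;> omega

end Aux
section MatAux

variable {n : ℕ}

lemma xMat_mul (i : ℕ) (h2 : i < n) (zz : K) (M : Matrix (Fin n) (Fin n) K) (a b : Fin n) :
    (xMat n i zz * M) a b = M a b + if (a : ℕ) + 1 = i then zz * M ⟨i, h2⟩ b else 0 := by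
  rw [Matrix.mul_apply]
  by_cases hP : (a : ℕ) + 1 = i
  · have key : ∀ c : Fin n, xMat n i zz a c * M c b =
        (if c = a then M c b else 0) + (if c = (⟨i, h2⟩ : Fin n) then zz * M c b else 0) := by
      intro c
      simp only [xMat, Matrix.of_apply, Fin.ext_iff]
      split_ifs <;> (first | ring1 | omega | (exfalso; omega))
    rw [Finset.sum_congr rfl (fun c _ => key c), Finset.sum_add_distrib,
      Finset.sum_ite_eq' Finset.univ a (fun c => M c b),
      Finset.sum_ite_eq' Finset.univ (⟨i, h2⟩ : Fin n) (fun c => zz * M c b),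
      if_pos (Finset.mem_univ _), if_pos (Finset.mem_univ _), if_pos hP]
  · have key : ∀ c : Fin n, xMat n i zz a c * M c b = (if c = a then M c b else 0) := by
      intro c
      simp only [xMat, Matrix.of_apply, Fin.ext_iff]
      split_ifs <;> (first | ring1 | omega | (exfalso; omega))
    rw [Finset.sum_congr rfl (fun c _ => key c),
      Finset.sum_ite_eq' Finset.univ a (fun c => M c b),
      if_pos (Finset.mem_univ _), if_neg hP, add_zero]

lemma yMat_mul (i : ℕ) (h1 : 1 ≤ i) (hm : i - 1 < n) (zz : K) (M : Matrix (Fin n) (Fin n) K)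
    (a b : Fin n) :
    (yMat n i zz * M) a b = M a b + if (a : ℕ) = i then zz * M ⟨i - 1, hm⟩ b else 0 := by
  rw [Matrix.mul_apply]
  by_cases hP : (a : ℕ) = i
  · have key : ∀ c : Fin n, yMat n i zz a c * M c b =
        (if c = a then M c b else 0) + (if c = (⟨i - 1, hm⟩ : Fin n) then zz * M c b else 0) := by
      intro c
      simp only [yMat, Matrix.of_apply, Fin.ext_iff]
      split_ifs <;> (first | ring1 | omega | (exfalso; omega))
    rw [Finset.sum_congr rfl (fun c _ => key c), Finset.sum_add_distrib,
      Finset.sum_ite_eq' Finset.univ a (fun c => M c b),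
      Finset.sum_ite_eq' Finset.univ (⟨i - 1, hm⟩ : Fin n) (fun c => zz * M c b),
      if_pos (Finset.mem_univ _), if_pos (Finset.mem_univ _), if_pos hP]
  · have key : ∀ c : Fin n, yMat n i zz a c * M c b = (if c = a then M c b else 0) := by
      intro c
      simp only [yMat, Matrix.of_apply, Fin.ext_iff]
      split_ifs <;> (first | ring1 | omega | (exfalso; omega))
    rw [Finset.sum_congr rfl (fun c _ => key c),
      Finset.sum_ite_eq' Finset.univ a (fun c => M c b),
      if_pos (Finset.mem_univ _), if_neg hP, add_zero]

lemma sbar_mul (i : ℕ) (h1 : 1 ≤ i) (h2 : i < n) (hm : i - 1 < n)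
    (M : Matrix (Fin n) (Fin n) K) (a b : Fin n) :
    ((sbar n i : Matrix (Fin n) (Fin n) K) * M) a b =
      if (a : ℕ) + 1 = i then -(M ⟨i, h2⟩ b)
      else if (a : ℕ) = i then M ⟨i - 1, hm⟩ b
      else M a b := by
  have assoc : (sbar n i : Matrix (Fin n) (Fin n) K) * M = xMat n i (-1) * (yMat n i 1 * (xMat n i (-1) * M)) := by
    rw [sbar, Matrix.mul_assoc, Matrix.mul_assoc]
  rw [assoc]
  simp only [xMat_mul i h2 ((-1 : K)), yMat_mul i h1 hm ((1 : K))]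
  split_ifs <;>
    first
      | ring1
      | omega
      | (exfalso; omega)
      | (obtain rfl : a = (⟨i - 1, hm⟩ : Fin n) := Fin.ext (by show (a:ℕ) = i - 1; omega); ring1)
      | (obtain rfl : a = (⟨i, h2⟩ : Fin n) := Fin.ext (by show (a:ℕ) = i; omega); ring1)

end MatAux
section WAux

variable {n : ℕ}

lemma prod_sbar_entries (l : List ℕ) (hl : ∀ i ∈ l, 1 ≤ i ∧ i < n) :
    ∃ ε : Fin n → K, (∀ c, ε c = 1 ∨ ε c = -1) ∧
      ∀ a c : Fin n, ((l.map fun i => (sbar n i : Matrix (Fin n) (Fin n) K)).prod) a c =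
        if (a : ℕ) + 1 = wordPerm l ((c : ℕ) + 1) then ε c else 0 := by
  induction l with
  | nil =>
    refine ⟨fun _ => 1, fun c => Or.inl rfl, fun a c => ?_⟩
    simp only [List.map_nil, List.prod_nil, Matrix.one_apply, wordPerm, List.foldr_nil, id]
    split_ifs with p q q <;> first | rfl | omega | (exfalso; exact p (Fin.ext (by omega))) |
      simp_all [Fin.ext_iff]
  | cons i l ih =>
    obtain ⟨h1, h2⟩ := hl i List.mem_cons_self
    obtain ⟨ε, hε, hM⟩ := ih fun j hj => hl j (List.mem_cons_of_mem _ hj)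
    refine ⟨fun c => if wordPerm l ((c : ℕ) + 1) = i + 1 then -ε c else ε c, ?_, ?_⟩
    · intro c
      rcases hε c with h | h <;> dsimp only <;> split_ifs <;> simp [h]
    · intro a c
      rw [List.map_cons, List.prod_cons,
        sbar_mul i h1 h2 (Nat.lt_of_le_of_lt (Nat.sub_le i 1) h2)]
      simp only [hM, wordPerm_cons, Function.comp_apply, sigmaFun]
      split_ifs <;> first | ring1 | omega | (exfalso; omega)

lemma w0Mat_entries (n : ℕ) :
    ∃ ε : Fin n → K, (∀ c, ε c = 1 ∨ ε c = -1) ∧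
      ∀ a c : Fin n, w0Mat n a c = if a = Fin.rev c then ε c else 0 := by
  obtain ⟨ε, hε, hM⟩ := prod_sbar_entries (n := n) (K := K) (i0List n)
    (fun i hi => by have := i0List_mem_bounds n i hi; omega)
  refine ⟨ε, hε, fun a c => ?_⟩
  have hw : wordPerm (i0List n) ((c : ℕ) + 1) = n + 1 - ((c : ℕ) + 1) := by
    rw [wordPerm_i0List, if_pos ⟨by omega, by have := c.isLt; omega⟩]
  have hrev : (a = Fin.rev c) ↔ ((a : ℕ) + 1 = n + 1 - ((c : ℕ) + 1)) := by
    rw [Fin.ext_iff, Fin.val_rev]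
    have := a.isLt; have := c.isLt
    omega
  rw [show w0Mat n (K := K) = ((i0List n).map fun i => sbar n i).prod from rfl, hM a c, hw]
  split_ifs with p q q
  · rfl
  · exact absurd (hrev.mpr p) q
  · exact absurd (hrev.mp q) p
  · rfl

variable {W : Matrix (Fin n) (Fin n) K} {ε : Fin n → K}

lemma mulW_left (hε : ∀ c, ε c = 1 ∨ ε c = -1)
    (hW : ∀ a c, W a c = if a = Fin.rev c then ε c else 0)
    (X : Matrix (Fin n) (Fin n) K) (a y : Fin n) :
    (W * X) a y = ε (Fin.rev a) * X (Fin.rev a) y := by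
  have key : ∀ x : Fin n, W a x * X x y =
      if x = Fin.rev a then ε (Fin.rev a) * X x y else 0 := by
    intro x
    rw [hW]
    rcases eq_or_ne x (Fin.rev a) with rfl | h
    · rw [if_pos (Fin.rev_rev a).symm, if_pos rfl]
    · rw [if_neg (fun h2 => h (by rw [h2, Fin.rev_rev])), if_neg h, zero_mul]
  rw [Matrix.mul_apply, Finset.sum_congr rfl fun x _ => key x,
    Finset.sum_ite_eq' Finset.univ (Fin.rev a) (fun x => ε (Fin.rev a) * X x y),
    if_pos (Finset.mem_univ _)]

lemma mulW_right (hε : ∀ c, ε c = 1 ∨ ε c = -1)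
    (hW : ∀ a c, W a c = if a = Fin.rev c then ε c else 0)
    (X : Matrix (Fin n) (Fin n) K) (a y : Fin n) :
    (X * Wᵀ) a y = X a (Fin.rev y) * ε (Fin.rev y) := by
  have key : ∀ x : Fin n, X a x * Wᵀ x y =
      if x = Fin.rev y then X a x * ε (Fin.rev y) else 0 := by
    intro x
    rw [Matrix.transpose_apply, hW]
    rcases eq_or_ne x (Fin.rev y) with rfl | h
    · rw [if_pos (Fin.rev_rev y).symm, if_pos rfl]
    · rw [if_neg (fun h2 => h (by rw [h2, Fin.rev_rev])), if_neg h, mul_zero]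
  rw [Matrix.mul_apply, Finset.sum_congr rfl fun x _ => key x,
    Finset.sum_ite_eq' Finset.univ (Fin.rev y) (fun x => X a x * ε (Fin.rev y)),
    if_pos (Finset.mem_univ _)]

lemma Wt_mul_W (hε : ∀ c, ε c = 1 ∨ ε c = -1)
    (hW : ∀ a c, W a c = if a = Fin.rev c then ε c else 0) : Wᵀ * W = 1 := by
  have key : ∀ x b b' : Fin n, Wᵀ b x * W x b' =
      if x = Fin.rev b' then (if b = b' then ε b' * ε b' else 0) else 0 := by
    intro x b b'
    by_cases h1 : x = Fin.rev b <;> by_cases h2 : x = Fin.rev b'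
    · obtain rfl : b = b' := Fin.rev_injective (h1.symm.trans h2)
      simp [Matrix.transpose_apply, hW, h1]
    · have hbb : b ≠ b' := fun h => h2 (h ▸ h1)
      simp [Matrix.transpose_apply, hW, h1, h2, hbb]
    · have hbb : b ≠ b' := fun h => h1 (h ▸ h2)
      simp [Matrix.transpose_apply, hW, h1, h2, hbb, Ne.symm hbb]
    · simp [Matrix.transpose_apply, hW, h1, h2]
  ext b b'
  rw [Matrix.mul_apply, Finset.sum_congr rfl fun x _ => key x b b',
    Finset.sum_ite_eq' Finset.univ (Fin.rev b')
      (fun _ => if b = b' then ε b' * ε b' else 0),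
    if_pos (Finset.mem_univ _), Matrix.one_apply]
  rcases eq_or_ne b b' with rfl | hb
  · rw [if_pos rfl, if_pos rfl]
    rcases hε b with h | h <;> rw [h] <;> norm_num
  · rw [if_neg hb, if_neg hb]

lemma conj_entry (hε : ∀ c, ε c = 1 ∨ ε c = -1)
    (hW : ∀ a c, W a c = if a = Fin.rev c then ε c else 0)
    (X : Matrix (Fin n) (Fin n) K) (a c : Fin n) :
    (W * X * Wᵀ) a c = ε (Fin.rev a) * X (Fin.rev a) (Fin.rev c) * ε (Fin.rev c) := by
  rw [mulW_right hε hW (W * X) a c, mulW_left hε hW X a (Fin.rev c)]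

lemma conj_diag (hε : ∀ c, ε c = 1 ∨ ε c = -1)
    (hW : ∀ a c, W a c = if a = Fin.rev c then ε c else 0) (f : Fin n → K) :
    W * Matrix.diagonal f * Wᵀ = Matrix.diagonal fun a => f (Fin.rev a) := by
  ext a c
  rw [conj_entry hε hW]
  rcases eq_or_ne a c with rfl | h
  · rw [Matrix.diagonal_apply_eq, Matrix.diagonal_apply_eq]
    rcases hε (Fin.rev a) with h | h <;> rw [h] <;> ring
  · rw [Matrix.diagonal_apply_ne _ (fun h2 => h (Fin.rev_injective h2)),
      Matrix.diagonal_apply_ne _ h, mul_zero, zero_mul]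

lemma conj_lowerUni (hε : ∀ c, ε c = 1 ∨ ε c = -1)
    (hW : ∀ a c, W a c = if a = Fin.rev c then ε c else 0)
    {X : Matrix (Fin n) (Fin n) K} (hX : IsLowerUni X) : IsUpperUni (W * X * Wᵀ) := by
  constructor
  · intro a
    rw [conj_entry hε hW, hX.1 (Fin.rev a)]
    rcases hε (Fin.rev a) with h | h <;> rw [h] <;> ring
  · intro a c hlt
    rw [conj_entry hε hW, hX.2 _ _ (Fin.rev_lt_rev.mpr hlt), mul_zero, zero_mul]

lemma conj_upperUni (hε : ∀ c, ε c = 1 ∨ ε c = -1)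
    (hW : ∀ a c, W a c = if a = Fin.rev c then ε c else 0)
    {X : Matrix (Fin n) (Fin n) K} (hX : IsUpperUni X) : IsLowerUni (W * X * Wᵀ) := by
  constructor
  · intro a
    rw [conj_entry hε hW, hX.1 (Fin.rev a)]
    rcases hε (Fin.rev a) with h | h <;> rw [h] <;> ring
  · intro a c hlt
    rw [conj_entry hε hW, hX.2 _ _ (Fin.rev_lt_rev.mpr hlt), mul_zero, zero_mul]

end WAux
section TriAux

variable {n : ℕ}

lemma mul_upperT {A B : Matrix (Fin n) (Fin n) K}
    (hA : ∀ i j : Fin n, j < i → A i j = 0) (hB : ∀ i j : Fin n, j < i → B i j = 0) :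
    (∀ i j : Fin n, j < i → (A * B) i j = 0) ∧ (∀ i : Fin n, (A * B) i i = A i i * B i i) := by
  constructor
  · intro i j hj
    rw [Matrix.mul_apply]
    apply Finset.sum_eq_zero
    intro c _
    rcases lt_or_ge c i with h | h
    · rw [hA i c h, zero_mul]
    · rw [hB c j (lt_of_lt_of_le hj h), mul_zero]
  · intro i
    rw [Matrix.mul_apply, Finset.sum_eq_single i]
    · intro c _ hc
      rcases lt_or_gt_of_ne hc with h | h
      · rw [hA i c h, zero_mul]
      · rw [hB c i h, mul_zero]
    · intro h; exact absurd (Finset.mem_univ i) h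

lemma mul_lowerT {A B : Matrix (Fin n) (Fin n) K}
    (hA : ∀ i j : Fin n, i < j → A i j = 0) (hB : ∀ i j : Fin n, i < j → B i j = 0) :
    (∀ i j : Fin n, i < j → (A * B) i j = 0) ∧ (∀ i : Fin n, (A * B) i i = A i i * B i i) := by
  constructor
  · intro i j hj
    rw [Matrix.mul_apply]
    apply Finset.sum_eq_zero
    intro c _
    rcases lt_or_ge i c with h | h
    · rw [hA i c h, zero_mul]
    · rw [hB c j (lt_of_le_of_lt h hj), mul_zero]
  · intro i
    rw [Matrix.mul_apply, Finset.sum_eq_single i]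
    · intro c _ hc
      rcases lt_or_gt_of_ne hc with h | h
      · rw [hB c i h, mul_zero]
      · rw [hA i c h, zero_mul]
    · intro h; exact absurd (Finset.mem_univ i) h

lemma lowerUni_mul {A B : Matrix (Fin n) (Fin n) K} (hA : IsLowerUni A) (hB : IsLowerUni B) :
    IsLowerUni (A * B) := by
  obtain ⟨h1, h2⟩ := mul_lowerT hA.2 hB.2
  exact ⟨fun i => by rw [h2 i, hA.1 i, hB.1 i, one_mul], h1⟩

lemma one_lowerUni : IsLowerUni (1 : Matrix (Fin n) (Fin n) K) :=
  ⟨fun i => Matrix.one_apply_eq i, fun i j h => Matrix.one_apply_ne (ne_of_lt h)⟩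

lemma yMat_lowerUni (i : ℕ) (zz : K) : IsLowerUni (yMat n i zz) := by
  constructor
  · intro a
    simp [yMat]
  · intro a c h
    simp only [yMat, Matrix.of_apply]
    rw [if_neg, if_neg]
    · rintro ⟨h1, h2⟩
      have := Fin.lt_iff_val_lt_val.mp h
      omega
    · exact fun h2 => absurd (Fin.ext h2 : a = c) (ne_of_lt h)

lemma diag_conj_lowerUni {f g : Fin n → K} (hfg : ∀ j, f j * g j = 1)
    {X : Matrix (Fin n) (Fin n) K} (hX : IsLowerUni X) :
    IsLowerUni (Matrix.diagonal f * X * Matrix.diagonal g) := by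
  constructor
  · intro a
    rw [Matrix.mul_diagonal, Matrix.diagonal_mul, hX.1 a, mul_one]
    exact hfg a
  · intro a c h
    rw [Matrix.mul_diagonal, Matrix.diagonal_mul, hX.2 a c h, mul_zero, zero_mul]

end TriAux

section FactorAux

variable {n : ℕ}

/-- Diagonal part of `x_{-i}(z)`. -/
def hdiagFn (n i : ℕ) (zz : K) : Fin n → K := fun j =>
  if (j : ℕ) + 1 = i then zz⁻¹ else if (j : ℕ) = i then zz else 1

/-- Accumulated diagonal part along a word. -/
def hProdFn (n : ℕ) : List ℕ → (ℕ → K) → Fin n → K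
  | [], _ => fun _ => 1
  | i :: l, z => fun j => hdiagFn n i (z 1) j * hProdFn n l (fun m => z (m + 1)) j

lemma hdiagFn_ne_zero {i : ℕ} {zz : K} (hz : zz ≠ 0) (j : Fin n) : hdiagFn n i zz j ≠ 0 := by
  unfold hdiagFn
  split_ifs
  · exact inv_ne_zero hz
  · exact hz
  · exact one_ne_zero

lemma hProdFn_ne_zero : ∀ (l : List ℕ) (z : ℕ → K),
    (∀ m, 1 ≤ m → m ≤ l.length → z m ≠ 0) → ∀ j, hProdFn n l z j ≠ 0 := by
  intro l
  induction l with
  | nil => intro z _ j; exact one_ne_zero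
  | cons i l ih =>
    intro z hz j
    apply mul_ne_zero
    · exact hdiagFn_ne_zero (hz 1 le_rfl (by simp)) j
    · exact ih _ (fun m hm1 hm2 => hz (m + 1) (by omega) (by simp; omega)) j

lemma xneg_factor (i : ℕ) (zz : K) (hz : zz ≠ 0) :
    xnegMat n i zz = yMat n i zz * Matrix.diagonal (hdiagFn n i zz) := by
  ext a b
  rw [Matrix.mul_diagonal]
  simp only [xnegMat, yMat, hdiagFn, Matrix.of_apply]
  split_ifs <;>
    first
      | rfl
      | omega
      | (exfalso; omega)
      | simp
      | (exact (inv_mul_cancel₀ hz).symm)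
      | (exact (mul_inv_cancel₀ hz).symm)

lemma xnegProd_cons (i : ℕ) (l : List ℕ) (z : ℕ → K) :
    xnegProd n (i :: l) z = xnegMat n i (z 1) * xnegProd n l (fun m => z (m + 1)) := by
  unfold xnegProd
  rw [List.length_cons, List.range_succ_eq_map, List.map_cons, List.map_map, List.prod_cons]
  congr 1

lemma xnegProd_factor : ∀ (l : List ℕ) (z : ℕ → K),
    (∀ m, 1 ≤ m → m ≤ l.length → z m ≠ 0) →
    ∃ Y : Matrix (Fin n) (Fin n) K, IsLowerUni Y ∧
      xnegProd n l z = Y * Matrix.diagonal (hProdFn n l z) := by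
  intro l
  induction l with
  | nil =>
    intro z _
    refine ⟨1, one_lowerUni, ?_⟩
    show (1 : Matrix (Fin n) (Fin n) K) = _
    rw [show hProdFn n [] z = fun _ => (1 : K) from rfl, Matrix.diagonal_one, one_mul]
  | cons i l ih =>
    intro z hz
    obtain ⟨Y, hY, hfac⟩ := ih (fun m => z (m + 1))
      (fun m h1 h2 => hz (m + 1) (by omega) (by simp; omega))
    have hz1 : z 1 ≠ 0 := hz 1 le_rfl (by simp)
    set f := hdiagFn n i (z 1) with hf
    have hfne : ∀ j, f j ≠ 0 := fun j => hdiagFn_ne_zero hz1 j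
    refine ⟨yMat n i (z 1) * (Matrix.diagonal f * Y * Matrix.diagonal fun j => (f j)⁻¹), ?_, ?_⟩
    · exact lowerUni_mul (yMat_lowerUni i (z 1))
        (diag_conj_lowerUni (fun j => mul_inv_cancel₀ (hfne j)) hY)
    · rw [xnegProd_cons, hfac, xneg_factor i (z 1) hz1]
      have hsplit : Matrix.diagonal (hProdFn n (i :: l) z) =
          Matrix.diagonal f * Matrix.diagonal (hProdFn n l fun m => z (m + 1)) := by
        rw [Matrix.diagonal_mul_diagonal]
        rfl
      rw [hsplit]
      simp only [← Matrix.mul_assoc]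
      rw [Matrix.mul_assoc (yMat n i (z 1) * Matrix.diagonal f * Y)
        (Matrix.diagonal fun j => (f j)⁻¹) (Matrix.diagonal f),
        Matrix.diagonal_mul_diagonal]
      rw [show Matrix.diagonal (fun j => (f j)⁻¹ * f j) = (1 : Matrix (Fin n) (Fin n) K) by
        rw [show (fun j => (f j)⁻¹ * f j) = fun _ => (1 : K) from
          funext fun j => inv_mul_cancel₀ (hfne j), Matrix.diagonal_one]]
      rw [Matrix.mul_one]

lemma hProdFn_eq : ∀ (l : List ℕ) (z : ℕ → K) (j : Fin n),
    hProdFn n l z j =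
      (∏ m ∈ Finset.range l.length, if l.getD m 0 = (j : ℕ) then z (m + 1) else 1) *
      (∏ m ∈ Finset.range l.length, if l.getD m 0 = (j : ℕ) + 1 then z (m + 1) else 1)⁻¹ := by
  intro l
  induction l with
  | nil => intro z j; simp [hProdFn]
  | cons i l ih =>
    intro z j
    have hd : hdiagFn n i (z 1) j =
        (if i = (j : ℕ) then z 1 else 1) * (if i = (j : ℕ) + 1 then z 1 else 1)⁻¹ := by
      unfold hdiagFn
      split_ifs <;> first | (exfalso; omega) | simp
    show hdiagFn n i (z 1) j * hProdFn n l (fun m => z (m + 1)) j = _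
    rw [hd, ih]
    rw [List.length_cons, Finset.prod_range_succ', Finset.prod_range_succ']
    simp only [List.getD_cons_succ, List.getD_cons_zero]
    rw [mul_inv]
    ring

lemma prod_Icc_eq (N : ℕ) (l : List ℕ) (hlen : l.length = N) (c : ℕ) (z : ℕ → K) :
    (∏ m ∈ (Finset.Icc 1 N).filter (fun m => l.getD (m - 1) 0 = c), z m) =
      ∏ m ∈ Finset.range N, if l.getD m 0 = c then z (m + 1) else 1 := by
  rw [Finset.prod_filter]
  refine Finset.prod_bij' (fun m _ => m - 1) (fun m _ => m + 1) ?_ ?_ ?_ ?_ ?_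
  · intro m hm
    rw [Finset.mem_Icc] at hm
    show m - 1 ∈ Finset.range N
    rw [Finset.mem_range]
    omega
  · intro m hm
    rw [Finset.mem_range] at hm
    show m + 1 ∈ Finset.Icc 1 N
    rw [Finset.mem_Icc]
    omega
  · intro m hm
    rw [Finset.mem_Icc] at hm
    show m - 1 + 1 = m
    omega
  · intro m _
    show m + 1 - 1 = m
    omega
  · intro m hm
    rw [Finset.mem_Icc] at hm
    show _ = if l.getD (m - 1) 0 = c then z (m - 1 + 1) else 1
    rw [show m - 1 + 1 = m by omega]

end FactorAux

theorem stmt2 (n : ℕ) (hn : 2 ≤ n) (z : ℕ → K)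
    (hz : ∀ k, 1 ≤ k → k ≤ n * (n - 1) / 2 → z k ≠ 0)
    (u : Matrix (Fin n) (Fin n) K) (hu : u = xnegProd n (i0List n) z)
    (L V : Matrix (Fin n) (Fin n) K) (hL : IsLowerUni L) (hV : IsUpperUni V)
    (hLV : (w0Mat n * uᵀ)⁻¹ = L * V)
    (u1 : Matrix (Fin n) (Fin n) K)
    (hu1 : u1 = (w0Mat n * V⁻¹ * (w0Mat (K := K) n)⁻¹)ᵀ)
    (d : Fin n → K) (hd : ∀ j, d j ≠ 0)
    (u2 : Matrix (Fin n) (Fin n) K) (hu2 : IsUpperUni u2)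
    (b : Matrix (Fin n) (Fin n) K) (hb : b = u1 * Matrix.diagonal d * w0Mat n * u2)
    (hbl : ∀ i j : Fin n, i < j → b i j = 0) :
    ∀ j : Fin n, b j.rev j.rev = d j *
      (∏ m ∈ (Finset.Icc 1 (n * (n - 1) / 2)).filter
          (fun m => (i0List n).getD (m - 1) 0 = (j : ℕ)), z m) /
      (∏ m ∈ (Finset.Icc 1 (n * (n - 1) / 2)).filter
          (fun m => (i0List n).getD (m - 1) 0 = (j : ℕ) + 1), z m) := by
  intro j
  have hlen : (i0List n).length = n * (n - 1) / 2 := i0List_length n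
  have hz' : ∀ m, 1 ≤ m → m ≤ (i0List n).length → z m ≠ 0 :=
    fun m h1 h2 => hz m h1 (hlen ▸ h2)
  obtain ⟨Y, hY, hufac⟩ := xnegProd_factor (n := n) (i0List n) z hz'
  rw [← hu] at hufac
  set Hd : Fin n → K := hProdFn n (i0List n) z with hHddef
  obtain ⟨ε, hε, hW⟩ := w0Mat_entries (K := K) n
  set W : Matrix (Fin n) (Fin n) K := w0Mat n with hWdef
  have hWtW : Wᵀ * W = 1 := Wt_mul_W hε hW
  have hWinv : W⁻¹ = Wᵀ := Matrix.inv_eq_left_inv hWtW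
  have hdetW : IsUnit W.det := by
    have h := congrArg Matrix.det hWtW
    rw [Matrix.det_mul, Matrix.det_transpose, Matrix.det_one] at h
    exact IsUnit.of_mul_eq_one _ h
  have hdetY : Y.det = 1 := by
    rw [Matrix.det_of_lowerTriangular Y
      (fun i j2 hij => hY.2 i j2 (OrderDual.toDual_lt_toDual.mp hij))]
    exact Finset.prod_eq_one fun i _ => hY.1 i
  have hHdne : ∀ a : Fin n, Hd a ≠ 0 := hProdFn_ne_zero (i0List n) z hz'
  have hdetu : IsUnit u.det := by
    rw [hufac, Matrix.det_mul, hdetY, one_mul, Matrix.det_diagonal]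
    exact isUnit_iff_ne_zero.mpr (Finset.prod_ne_zero_iff.mpr fun a _ => hHdne a)
  have hdetWu : IsUnit (W * uᵀ).det := by
    rw [Matrix.det_mul, Matrix.det_transpose]
    exact hdetW.mul hdetu
  have hone : (W * uᵀ) * (L * V) = 1 := by
    rw [← hLV]; exact Matrix.mul_nonsing_inv _ hdetWu
  have hVinv : V⁻¹ = W * uᵀ * L := by
    apply Matrix.inv_eq_left_inv
    calc W * uᵀ * L * V = (W * uᵀ) * (L * V) := by rw [Matrix.mul_assoc]
      _ = 1 := hone
  have hu1' : u1 = W * Lᵀ * u * Wᵀ * Wᵀ := by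
    rw [hu1, hVinv, hWinv]
    simp only [Matrix.transpose_mul, Matrix.transpose_transpose, Matrix.mul_assoc]
  have hdrevW : Wᵀ * Matrix.diagonal d * W = Matrix.diagonal fun a => d (Fin.rev a) := by
    have h1 : W * Matrix.diagonal (fun a => d (Fin.rev a)) * Wᵀ = Matrix.diagonal d := by
      rw [conj_diag hε hW]
      exact congrArg Matrix.diagonal (funext fun a => by rw [Fin.rev_rev])
    calc Wᵀ * Matrix.diagonal d * W
        = Wᵀ * (W * Matrix.diagonal (fun a => d (Fin.rev a)) * Wᵀ) * W := by rw [h1]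
      _ = Wᵀ * W * Matrix.diagonal (fun a => d (Fin.rev a)) * (Wᵀ * W) := by
          simp only [Matrix.mul_assoc]
      _ = Matrix.diagonal fun a => d (Fin.rev a) := by
          rw [hWtW, Matrix.one_mul, Matrix.mul_one]
  have collapse : ∀ A : Matrix (Fin n) (Fin n) K, A * Wᵀ * W = A := fun A => by
    rw [Matrix.mul_assoc, hWtW, Matrix.mul_one]
  have key : b = (W * Lᵀ * Wᵀ) * ((W * Y * Wᵀ) *
      ((W * Matrix.diagonal Hd * Wᵀ) * ((Wᵀ * Matrix.diagonal d * W) * u2))) := by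
    rw [hb, hu1', hufac]
    simp only [← Matrix.mul_assoc]
    rw [collapse (W * Lᵀ), collapse (W * Lᵀ * Y)]
  rw [conj_diag hε hW Hd, hdrevW] at key
  set g : Fin n → K := fun a => Hd (Fin.rev a) * d (Fin.rev a) with hgdef
  have hmerge : Matrix.diagonal (fun a => Hd (Fin.rev a)) *
      (Matrix.diagonal (fun a => d (Fin.rev a)) * u2) = Matrix.diagonal g * u2 := by
    rw [← Matrix.mul_assoc, Matrix.diagonal_mul_diagonal]
  rw [hmerge] at key
  set L1 : Matrix (Fin n) (Fin n) K := W * Lᵀ * Wᵀ with hL1def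
  have hLT : IsUpperUni Lᵀ := ⟨fun i => hL.1 i, fun i j2 hij => hL.2 j2 i hij⟩
  have hL1uni : IsLowerUni L1 := by
    rw [hL1def]; exact conj_upperUni hε hW hLT
  have hU1 : IsUpperUni (W * Y * Wᵀ) := conj_lowerUni hε hW hY
  have hDg_tri : ∀ i j2 : Fin n, j2 < i → Matrix.diagonal g i j2 = 0 :=
    fun i j2 h => Matrix.diagonal_apply_ne g (ne_of_gt h)
  have hgu2 := mul_upperT hDg_tri hu2.2
  have hR := mul_upperT hU1.2 hgu2.1
  have hRdiag : ((W * Y * Wᵀ) * (Matrix.diagonal g * u2)) j.rev j.rev = g j.rev := by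
    rw [hR.2 j.rev, hgu2.2 j.rev, hU1.1 j.rev, hu2.1 j.rev, Matrix.diagonal_apply_eq, one_mul,
      mul_one]
  have hdetL1 : IsUnit L1.det := by
    rw [Matrix.det_of_lowerTriangular L1
      (fun i j2 hij => hL1uni.2 i j2 (OrderDual.toDual_lt_toDual.mp hij))]
    exact IsUnit.of_mul_eq_one 1 (by rw [Finset.prod_eq_one fun i _ => hL1uni.1 i, one_mul])
  haveI : Invertible L1 := L1.invertibleOfIsUnitDet hdetL1
  have hbt : L1.BlockTriangular (OrderDual.toDual : Fin n → (Fin n)ᵒᵈ) :=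
    fun i j2 hij => hL1uni.2 i j2 (OrderDual.toDual_lt_toDual.mp hij)
  have hinvbt := Matrix.blockTriangular_inv_of_blockTriangular hbt
  have hinv_tri : ∀ i j2 : Fin n, i < j2 → L1⁻¹ i j2 = 0 :=
    fun i j2 hij => hinvbt (OrderDual.toDual_lt_toDual.mpr hij)
  have hinv_mul : L1⁻¹ * L1 = 1 := Matrix.nonsing_inv_mul _ hdetL1
  have hinv_diag : L1⁻¹ j.rev j.rev = 1 := by
    have h1 : (L1⁻¹ * L1) j.rev j.rev = 1 := by rw [hinv_mul, Matrix.one_apply_eq]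
    have hsum : (L1⁻¹ * L1) j.rev j.rev = L1⁻¹ j.rev j.rev * L1 j.rev j.rev := by
      rw [Matrix.mul_apply]
      apply Finset.sum_eq_single
      · intro c _ hc
        rcases lt_or_gt_of_ne hc with h | h
        · rw [hL1uni.2 c j.rev h, mul_zero]
        · rw [hinv_tri j.rev c h, zero_mul]
      · intro hmem; exact absurd (Finset.mem_univ _) hmem
    rw [hsum, hL1uni.1, mul_one] at h1
    exact h1
  have hbR : L1⁻¹ * b = (W * Y * Wᵀ) * (Matrix.diagonal g * u2) := by
    rw [key, ← Matrix.mul_assoc, hinv_mul, Matrix.one_mul]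
  have hdiag_b : b j.rev j.rev = g j.rev := by
    have h0 : (L1⁻¹ * b) j.rev j.rev = g j.rev := by rw [hbR]; exact hRdiag
    have hsum : (L1⁻¹ * b) j.rev j.rev = L1⁻¹ j.rev j.rev * b j.rev j.rev := by
      rw [Matrix.mul_apply]
      apply Finset.sum_eq_single
      · intro c _ hc
        rcases lt_or_gt_of_ne hc with h | h
        · rw [hbl c j.rev h, mul_zero]
        · rw [hinv_tri j.rev c h, zero_mul]
      · intro hmem; exact absurd (Finset.mem_univ _) hmem
    rw [hsum, hinv_diag, one_mul] at h0
    exact h0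
  rw [hdiag_b]
  show Hd j.rev.rev * d j.rev.rev = _
  rw [Fin.rev_rev,
    prod_Icc_eq (n * (n - 1) / 2) (i0List n) hlen ((j : ℕ)) z,
    prod_Icc_eq (n * (n - 1) / 2) (i0List n) hlen ((j : ℕ) + 1) z,
    ← hlen, hHddef, hProdFn_eq (i0List n) z j, div_eq_mul_inv]
  ring
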